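/- Suboptimality bound for softmax policies via expected Bellman errors: Let Q = (Q_h)_{h=1}^H with Q_h : S_h × A → ℝ and let π̂ := π_Q be its softmax policy. Then for every policy π† (in particular for any maximizer π* of J_β over policies), J_β(π†) − J_β(π̂) ≤ 2β · max over π ∈ {π†, π̂} of | E_π[ Σ_{h=1}^H ( Q_h(s_h,a_h) − (T_β Q)_h(s_h,a_h) ) ] |. -/

import Mathlib

open Finset

namespace TBRM

/-- `p` is a probability mass function on a finite type. -/
def IsPMF {X : Type*} [Fintype X] (p : X → ℝ) : Prop :=
  (∀ x, 0 ≤ p x) ∧ ∑ x, p x = 1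

/-- χ²-divergence between pmfs on a finite type. -/
noncomputable def chiSq {X : Type*} [Fintype X] (p q : X → ℝ) : ℝ :=
  (∑ x, p x ^ 2 / q x) - 1

variable {H : ℕ} {S : Fin (H + 1) → Type*} {A : Type*}
variable [∀ i, Fintype (S i)] [∀ i, DecidableEq (S i)] [Fintype A] [DecidableEq A]

/-- Density of a full trajectory (including the extra final state `s_{H+1}`),
under initial distribution `ρ`, transition kernels `P`, and policy `π`. -/
noncomputable def trajDensity (ρ : S 0 → ℝ)
    (P : ∀ h : Fin H, S h.castSucc → A → S h.succ → ℝ)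
    (π : ∀ h : Fin H, S h.castSucc → A → ℝ)
    (s : ∀ i : Fin (H + 1), S i) (a : Fin H → A) : ℝ :=
  ρ (s 0) * ∏ h : Fin H, (π h (s h.castSucc) (a h) * P h (s h.castSucc) (a h) (s h.succ))

/-- Expectation of a trajectory functional under policy `π`. -/
noncomputable def expTraj (ρ : S 0 → ℝ)
    (P : ∀ h : Fin H, S h.castSucc → A → S h.succ → ℝ)
    (π : ∀ h : Fin H, S h.castSucc → A → ℝ)
    (f : (∀ i : Fin (H + 1), S i) → (Fin H → A) → ℝ) : ℝ :=
  ∑ s : ∀ i : Fin (H + 1), S i, ∑ a : Fin H → A, trajDensity ρ P π s a * f s a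

/-- Step-`h` occupancy measure `d_h^π(x,b)`. -/
noncomputable def occ (ρ : S 0 → ℝ)
    (P : ∀ h : Fin H, S h.castSucc → A → S h.succ → ℝ)
    (π : ∀ h : Fin H, S h.castSucc → A → ℝ)
    (h : Fin H) (x : S h.castSucc) (b : A) : ℝ :=
  expTraj ρ P π (fun s a => if s h.castSucc = x ∧ a h = b then 1 else 0)


/-- KL-regularized return `J_β(π)` relative to a reference policy `πref`. -/
noncomputable def KLret (ρ : S 0 → ℝ)
    (P : ∀ h : Fin H, S h.castSucc → A → S h.succ → ℝ)
    (πref : ∀ h : Fin H, S h.castSucc → A → ℝ)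
    (r : ∀ h : Fin H, S h.castSucc → A → ℝ) (β : ℝ)
    (π : ∀ h : Fin H, S h.castSucc → A → ℝ) : ℝ :=
  expTraj ρ P π (fun s a => ∑ h : Fin H,
    (r h (s h.castSucc) (a h)
      - β * Real.log (π h (s h.castSucc) (a h) / πref h (s h.castSucc) (a h))))

/-- Shifted reward `R_h(s,a) := r_h(s,a)/β + log πref_h(a|s)`. -/
noncomputable def shiftedR (πref : ∀ h : Fin H, S h.castSucc → A → ℝ)
    (r : ∀ h : Fin H, S h.castSucc → A → ℝ) (β : ℝ)
    (h : Fin H) (s : S h.castSucc) (a : A) : ℝ :=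
  r h s a / β + Real.log (πref h s a)

/-- The soft value function of `Q`: `V_{Q,h}(s) = log Σ_a exp(Q_h(s,a))` on layers
`1, …, H`, and `V_{Q,H+1} ≡ 0` on the last layer. -/
noncomputable def VQ (Q : ∀ h : Fin H, S h.castSucc → A → ℝ) :
    ∀ i : Fin (H + 1), S i → ℝ :=
  Fin.lastCases (fun _ => 0)
    (fun h s => Real.log (∑ a : A, Real.exp (Q h s a)))

/-- The softmax policy of `Q`: `π_{Q,h}(a|s) := exp(Q_h(s,a) − V_{Q,h}(s))`. -/
noncomputable def softmaxPolicy (Q : ∀ h : Fin H, S h.castSucc → A → ℝ)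
    (h : Fin H) (s : S h.castSucc) (a : A) : ℝ :=
  Real.exp (Q h s a - VQ Q h.castSucc s)

/-- The soft Bellman optimality operator
`(T_β Q)_h(s,a) := R_h(s,a) + E_{s'∼P_h(s,a)}[V_{Q,h+1}(s')]`. -/
noncomputable def Topt (P : ∀ h : Fin H, S h.castSucc → A → S h.succ → ℝ)
    (πref : ∀ h : Fin H, S h.castSucc → A → ℝ)
    (r : ∀ h : Fin H, S h.castSucc → A → ℝ) (β : ℝ)
    (Q : ∀ h : Fin H, S h.castSucc → A → ℝ)
    (h : Fin H) (s : S h.castSucc) (b : A) : ℝ :=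
  shiftedR πref r β h s b + ∑ s' : S h.succ, P h s b s' * VQ Q h.succ s'


/-! ### Auxiliary machinery -/

set_option linter.unusedSectionVars false

section AuxSum

lemma sum_sum_update {ι : Type*} [Fintype ι] [DecidableEq ι] {T : ι → Type*}
    [∀ i, Fintype (T i)] (j : ι) (F : (∀ i, T i) → ℝ) :
    ∑ s : ∀ i, T i, ∑ y : T j, F (Function.update s j y)
      = (Fintype.card (T j) : ℝ) * ∑ s : ∀ i, T i, F s := by
  have h1 : ∑ p : (∀ i, T i) × T j, F (Function.update p.1 j p.2)
      = ∑ p : (∀ i, T i) × T j, F p.1 := by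
    refine Fintype.sum_equiv
      ⟨fun p => (Function.update p.1 j p.2, p.1 j),
       fun p => (Function.update p.1 j p.2, p.1 j), ?_, ?_⟩ _ _ ?_
    · intro p
      simp [Function.update_idem, Function.update_self, Function.update_eq_self]
    · intro p
      simp [Function.update_idem, Function.update_self, Function.update_eq_self]
    · intro p
      rfl
  calc ∑ s : ∀ i, T i, ∑ y : T j, F (Function.update s j y)
      = ∑ p : (∀ i, T i) × T j, F (Function.update p.1 j p.2) :=
        (Fintype.sum_prod_type' (f := fun s y => F (Function.update s j y))).symm
    _ = ∑ p : (∀ i, T i) × T j, F p.1 := h1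
    _ = ∑ s : ∀ i, T i, ∑ _y : T j, F s :=
        (Fintype.sum_prod_type' (f := fun s _y => F s))
    _ = (Fintype.card (T j) : ℝ) * ∑ s : ∀ i, T i, F s := by
        simp [Finset.sum_const, card_univ, nsmul_eq_mul, Finset.mul_sum]

lemma sum4_update (j : Fin (H + 1)) (k : Fin H)
    (F : (∀ i : Fin (H + 1), S i) → (Fin H → A) → ℝ) :
    ∑ s : ∀ i : Fin (H + 1), S i, ∑ a : Fin H → A, ∑ y : S j, ∑ b : A,
        F (Function.update s j y) (Function.update a k b)
      = (Fintype.card (S j) : ℝ) * (Fintype.card A : ℝ) *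
          ∑ s : ∀ i : Fin (H + 1), S i, ∑ a : Fin H → A, F s a := by
  have step1 : ∀ s : ∀ i : Fin (H + 1), S i, ∀ y : S j,
      ∑ a : Fin H → A, ∑ b : A, F (Function.update s j y) (Function.update a k b)
        = (Fintype.card A : ℝ) * ∑ a : Fin H → A, F (Function.update s j y) a := by
    intro s y
    exact sum_sum_update (T := fun _ : Fin H => A) k (fun a => F (Function.update s j y) a)
  calc ∑ s : ∀ i : Fin (H + 1), S i, ∑ a : Fin H → A, ∑ y : S j, ∑ b : A,
        F (Function.update s j y) (Function.update a k b)
      = ∑ s : ∀ i : Fin (H + 1), S i, ∑ y : S j, ∑ a : Fin H → A, ∑ b : A,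
        F (Function.update s j y) (Function.update a k b) := by
        exact Finset.sum_congr rfl fun s _ => Finset.sum_comm
    _ = ∑ s : ∀ i : Fin (H + 1), S i, ∑ y : S j,
          (Fintype.card A : ℝ) * ∑ a : Fin H → A, F (Function.update s j y) a := by
        exact Finset.sum_congr rfl fun s _ => Finset.sum_congr rfl fun y _ => step1 s y
    _ = (Fintype.card A : ℝ) * ∑ s : ∀ i : Fin (H + 1), S i, ∑ y : S j,
          ∑ a : Fin H → A, F (Function.update s j y) a := by
        rw [Finset.mul_sum]
        exact Finset.sum_congr rfl fun s _ => (Finset.mul_sum _ _ _).symm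
    _ = (Fintype.card A : ℝ) * ((Fintype.card (S j) : ℝ) *
          ∑ s : ∀ i : Fin (H + 1), S i, ∑ a : Fin H → A, F s a) := by
        rw [sum_sum_update j (fun s => ∑ a : Fin H → A, F s a)]
    _ = _ := by ring

lemma sum2_update_le (j : Fin (H + 1)) (k : Fin H) [∀ i, Nonempty (S i)] [Nonempty A]
    (F G : (∀ i : Fin (H + 1), S i) → (Fin H → A) → ℝ)
    (h : ∀ s a, ∑ y : S j, ∑ b : A, F (Function.update s j y) (Function.update a k b)
        ≤ ∑ y : S j, ∑ b : A, G (Function.update s j y) (Function.update a k b)) :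
    ∑ s : ∀ i : Fin (H + 1), S i, ∑ a : Fin H → A, F s a
      ≤ ∑ s : ∀ i : Fin (H + 1), S i, ∑ a : Fin H → A, G s a := by
  have hc : (0:ℝ) < (Fintype.card (S j) : ℝ) * (Fintype.card A : ℝ) := by
    have h1 := Fintype.card_pos (α := S j)
    have h2 := Fintype.card_pos (α := A)
    positivity
  have key : (Fintype.card (S j) : ℝ) * (Fintype.card A : ℝ) *
        (∑ s : ∀ i : Fin (H + 1), S i, ∑ a : Fin H → A, F s a)
      ≤ (Fintype.card (S j) : ℝ) * (Fintype.card A : ℝ) *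
        (∑ s : ∀ i : Fin (H + 1), S i, ∑ a : Fin H → A, G s a) := by
    rw [← sum4_update j k F, ← sum4_update j k G]
    exact Finset.sum_le_sum fun s _ => Finset.sum_le_sum fun a _ => h s a
  exact le_of_mul_le_mul_left key hc

lemma sum2_update_eq (j : Fin (H + 1)) (k : Fin H) [∀ i, Nonempty (S i)] [Nonempty A]
    (F G : (∀ i : Fin (H + 1), S i) → (Fin H → A) → ℝ)
    (h : ∀ s a, ∑ y : S j, ∑ b : A, F (Function.update s j y) (Function.update a k b)
        = ∑ y : S j, ∑ b : A, G (Function.update s j y) (Function.update a k b)) :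
    ∑ s : ∀ i : Fin (H + 1), S i, ∑ a : Fin H → A, F s a
      = ∑ s : ∀ i : Fin (H + 1), S i, ∑ a : Fin H → A, G s a :=
  le_antisymm (sum2_update_le j k F G fun s a => le_of_eq (h s a))
    (sum2_update_le j k G F fun s a => le_of_eq (h s a).symm)

end AuxSum

section Hyb

/-- Hybrid trajectory density: true dynamics before step `m`, uniform afterwards. -/
noncomputable def hyb (ρ : S 0 → ℝ)
    (P : ∀ h : Fin H, S h.castSucc → A → S h.succ → ℝ)
    (π : ∀ h : Fin H, S h.castSucc → A → ℝ) (m : ℕ)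
    (s : ∀ i : Fin (H + 1), S i) (a : Fin H → A) : ℝ :=
  ρ (s 0) * ∏ h : Fin H,
    (if h.val < m then π h (s h.castSucc) (a h) * P h (s h.castSucc) (a h) (s h.succ)
     else (Fintype.card A : ℝ)⁻¹ * (Fintype.card (S h.succ) : ℝ)⁻¹)

noncomputable def Cfac (ρ : S 0 → ℝ)
    (P : ∀ h : Fin H, S h.castSucc → A → S h.succ → ℝ)
    (π : ∀ h : Fin H, S h.castSucc → A → ℝ) (t : Fin H)
    (s : ∀ i : Fin (H + 1), S i) (a : Fin H → A) : ℝ :=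
  ρ (s 0) * ∏ h ∈ Finset.univ.erase t,
    (if h.val < t.val then π h (s h.castSucc) (a h) * P h (s h.castSucc) (a h) (s h.succ)
     else (Fintype.card A : ℝ)⁻¹ * (Fintype.card (S h.succ) : ℝ)⁻¹)

lemma hyb_top (ρ : S 0 → ℝ) (P : ∀ h : Fin H, S h.castSucc → A → S h.succ → ℝ)
    (π : ∀ h : Fin H, S h.castSucc → A → ℝ)
    (s : ∀ i : Fin (H + 1), S i) (a : Fin H → A) :
    hyb ρ P π H s a = trajDensity ρ P π s a := by
  unfold hyb trajDensity
  congr 1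
  exact Finset.prod_congr rfl fun h _ => if_pos h.isLt

lemma Cfac_nonneg (ρ : S 0 → ℝ) (P : ∀ h : Fin H, S h.castSucc → A → S h.succ → ℝ)
    (π : ∀ h : Fin H, S h.castSucc → A → ℝ)
    (hρ : ∀ x, 0 ≤ ρ x) (hP : ∀ h x b y, 0 ≤ P h x b y) (hπ : ∀ h x b, 0 ≤ π h x b)
    (t : Fin H) (s : ∀ i : Fin (H + 1), S i) (a : Fin H → A) :
    0 ≤ Cfac ρ P π t s a := by
  refine mul_nonneg (hρ _) (Finset.prod_nonneg fun h _ => ?_)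
  split_ifs
  · exact mul_nonneg (hπ _ _ _) (hP _ _ _ _)
  · positivity

lemma erase_prod_update (ρ : S 0 → ℝ) (P : ∀ h : Fin H, S h.castSucc → A → S h.succ → ℝ)
    (π : ∀ h : Fin H, S h.castSucc → A → ℝ) (t : Fin H)
    (s : ∀ i : Fin (H + 1), S i) (a : Fin H → A) (y : S t.succ) (b : A)
    (m : ℕ) (hm : ∀ n, n ≠ t.val → (n < m ↔ n < t.val)) :
    (∏ h ∈ Finset.univ.erase t,
      (if h.val < m then
          π h ((Function.update s t.succ y) h.castSucc) ((Function.update a t b) h)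
            * P h ((Function.update s t.succ y) h.castSucc) ((Function.update a t b) h)
                ((Function.update s t.succ y) h.succ)
       else (Fintype.card A : ℝ)⁻¹ * (Fintype.card (S h.succ) : ℝ)⁻¹))
    = ∏ h ∈ Finset.univ.erase t,
      (if h.val < t.val then π h (s h.castSucc) (a h) * P h (s h.castSucc) (a h) (s h.succ)
       else (Fintype.card A : ℝ)⁻¹ * (Fintype.card (S h.succ) : ℝ)⁻¹) := by
  refine Finset.prod_congr rfl fun h hh => ?_
  have hne : h ≠ t := (Finset.mem_erase.1 hh).1
  have hv : h.val ≠ t.val := fun hc => hne (Fin.ext hc)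
  by_cases hlt : h.val < t.val
  · rw [if_pos ((hm h.val hv).2 hlt), if_pos hlt]
    have e1 : (Function.update s t.succ y) h.castSucc = s h.castSucc :=
      Function.update_of_ne (by
        refine Fin.ne_of_val_ne ?_
        simp only [Fin.coe_castSucc, Fin.val_succ]
        omega) _ _
    have e2 : (Function.update s t.succ y) h.succ = s h.succ :=
      Function.update_of_ne (by
        refine Fin.ne_of_val_ne ?_
        simp only [Fin.val_succ]
        omega) _ _
    have e3 : (Function.update a t b) h = a h := Function.update_of_ne hne _ _
    rw [e1, e2, e3]
  · rw [if_neg (fun hc => hlt ((hm h.val hv).1 hc)), if_neg hlt]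

lemma hyb_update_succ (ρ : S 0 → ℝ) (P : ∀ h : Fin H, S h.castSucc → A → S h.succ → ℝ)
    (π : ∀ h : Fin H, S h.castSucc → A → ℝ) (t : Fin H)
    (s : ∀ i : Fin (H + 1), S i) (a : Fin H → A) (y : S t.succ) (b : A) :
    hyb ρ P π (t.val + 1) (Function.update s t.succ y) (Function.update a t b)
      = Cfac ρ P π t s a * (π t (s t.castSucc) b * P t (s t.castSucc) b y) := by
  unfold hyb Cfac
  rw [← Finset.mul_prod_erase Finset.univ _ (Finset.mem_univ t)]
  rw [if_pos (Nat.lt_succ_self t.val)]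
  have h0 : (Function.update s t.succ y) 0 = s 0 :=
    Function.update_of_ne (Fin.succ_ne_zero t).symm _ _
  have hcs : (Function.update s t.succ y) t.castSucc = s t.castSucc :=
    Function.update_of_ne (by
      refine Fin.ne_of_val_ne ?_
      simp only [Fin.coe_castSucc, Fin.val_succ]
      omega) _ _
  have hss : (Function.update s t.succ y) t.succ = y := Function.update_self _ _ _
  have hat : (Function.update a t b) t = b := Function.update_self _ _ _
  rw [h0, hcs, hss, hat,
    erase_prod_update ρ P π t s a y b (t.val + 1) (fun n hn => by omega)]
  ring

lemma hyb_update_self (ρ : S 0 → ℝ) (P : ∀ h : Fin H, S h.castSucc → A → S h.succ → ℝ)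
    (π : ∀ h : Fin H, S h.castSucc → A → ℝ) (t : Fin H)
    (s : ∀ i : Fin (H + 1), S i) (a : Fin H → A) (y : S t.succ) (b : A) :
    hyb ρ P π t.val (Function.update s t.succ y) (Function.update a t b)
      = Cfac ρ P π t s a * ((Fintype.card A : ℝ)⁻¹ * (Fintype.card (S t.succ) : ℝ)⁻¹) := by
  unfold hyb Cfac
  rw [← Finset.mul_prod_erase Finset.univ _ (Finset.mem_univ t)]
  rw [if_neg (lt_irrefl t.val)]
  have h0 : (Function.update s t.succ y) 0 = s 0 :=
    Function.update_of_ne (Fin.succ_ne_zero t).symm _ _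
  rw [h0, erase_prod_update ρ P π t s a y b t.val (fun n hn => Iff.rfl)]
  ring

variable [∀ i, Nonempty (S i)] [Nonempty A]

lemma inner_pp (t : Fin H) (x : S t.castSucc)
    (π : ∀ h : Fin H, S h.castSucc → A → ℝ)
    (P : ∀ h : Fin H, S h.castSucc → A → S h.succ → ℝ)
    (hP : ∀ b, ∑ y : S t.succ, P t x b y = 1) (hπ : ∑ b : A, π t x b = 1)
    (c : ℝ) :
    ∑ y : S t.succ, ∑ b : A, c * (π t x b * P t x b y) = c := by
  rw [Finset.sum_comm]
  have h1 : ∀ b : A, ∑ y : S t.succ, c * (π t x b * P t x b y) = c * π t x b := by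
    intro b
    calc ∑ y : S t.succ, c * (π t x b * P t x b y)
        = ∑ y : S t.succ, (c * π t x b) * P t x b y :=
          Finset.sum_congr rfl fun y _ => by ring
      _ = (c * π t x b) * ∑ y : S t.succ, P t x b y := (Finset.mul_sum _ _ _).symm
      _ = c * π t x b := by rw [hP b, mul_one]
  calc ∑ b : A, ∑ y : S t.succ, c * (π t x b * P t x b y)
      = ∑ b : A, c * π t x b := Finset.sum_congr rfl fun b _ => h1 b
    _ = c * ∑ b : A, π t x b := (Finset.mul_sum _ _ _).symm
    _ = c := by rw [hπ, mul_one]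

lemma inner_unif (t : Fin H) (c : ℝ) :
    ∑ _y : S t.succ, ∑ _b : A,
        c * ((Fintype.card A : ℝ)⁻¹ * (Fintype.card (S t.succ) : ℝ)⁻¹) = c := by
  rw [Finset.sum_const, Finset.sum_const]
  have hA : (Fintype.card A : ℝ) ≠ 0 := Nat.cast_ne_zero.2 Fintype.card_ne_zero
  have hS : (Fintype.card (S t.succ) : ℝ) ≠ 0 := Nat.cast_ne_zero.2 Fintype.card_ne_zero
  simp only [card_univ, nsmul_eq_mul]
  field_simp

lemma hyb_step (ρ : S 0 → ℝ) (P : ∀ h : Fin H, S h.castSucc → A → S h.succ → ℝ)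
    (π : ∀ h : Fin H, S h.castSucc → A → ℝ)
    (hP : ∀ h x b, ∑ y, P h x b y = 1) (hπ : ∀ h x, ∑ b, π h x b = 1)
    (m : ℕ) (hm : m < H)
    (f : (∀ i : Fin (H + 1), S i) → (Fin H → A) → ℝ)
    (hfs : ∀ s a y, f (Function.update s (⟨m, hm⟩ : Fin H).succ y) a = f s a)
    (hfa : ∀ s a b, f s (Function.update a (⟨m, hm⟩ : Fin H) b) = f s a) :
    ∑ s : ∀ i : Fin (H + 1), S i, ∑ a : Fin H → A, hyb ρ P π (m + 1) s a * f s a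
      = ∑ s : ∀ i : Fin (H + 1), S i, ∑ a : Fin H → A, hyb ρ P π m s a * f s a := by
  set t : Fin H := ⟨m, hm⟩ with ht
  refine sum2_update_eq t.succ t _ _ (fun s a => ?_)
  have hf : ∀ y b, f (Function.update s t.succ y) (Function.update a t b) = f s a :=
    fun y b => by rw [hfa, hfs]
  calc ∑ y : S t.succ, ∑ b : A,
        hyb ρ P π (m + 1) (Function.update s t.succ y) (Function.update a t b)
          * f (Function.update s t.succ y) (Function.update a t b)
      = ∑ y : S t.succ, ∑ b : A,
          (Cfac ρ P π t s a * f s a) * (π t (s t.castSucc) b * P t (s t.castSucc) b y) := by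
        refine Finset.sum_congr rfl fun y _ => Finset.sum_congr rfl fun b _ => ?_
        rw [hf y b, show m + 1 = t.val + 1 from rfl, hyb_update_succ]
        ring
    _ = Cfac ρ P π t s a * f s a :=
        inner_pp t (s t.castSucc) π P (fun b => hP t _ b) (hπ t _) _
    _ = ∑ y : S t.succ, ∑ b : A,
          (Cfac ρ P π t s a * f s a)
            * ((Fintype.card A : ℝ)⁻¹ * (Fintype.card (S t.succ) : ℝ)⁻¹) :=
        (inner_unif t _).symm
    _ = ∑ y : S t.succ, ∑ b : A,
        hyb ρ P π m (Function.update s t.succ y) (Function.update a t b)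
          * f (Function.update s t.succ y) (Function.update a t b) := by
        refine Finset.sum_congr rfl fun y _ => Finset.sum_congr rfl fun b _ => ?_
        rw [hf y b, show m = t.val from rfl, hyb_update_self]
        ring

lemma hyb_chain (ρ : S 0 → ℝ) (P : ∀ h : Fin H, S h.castSucc → A → S h.succ → ℝ)
    (π : ∀ h : Fin H, S h.castSucc → A → ℝ)
    (hP : ∀ h x b, ∑ y, P h x b y = 1) (hπ : ∀ h x, ∑ b, π h x b = 1)
    (k : ℕ) (hk : k ≤ H)
    (f : (∀ i : Fin (H + 1), S i) → (Fin H → A) → ℝ)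
    (hfs : ∀ t : Fin H, k ≤ t.val → ∀ s a y, f (Function.update s t.succ y) a = f s a)
    (hfa : ∀ t : Fin H, k ≤ t.val → ∀ s a b, f s (Function.update a t b) = f s a) :
    ∑ s : ∀ i : Fin (H + 1), S i, ∑ a : Fin H → A, hyb ρ P π H s a * f s a
      = ∑ s : ∀ i : Fin (H + 1), S i, ∑ a : Fin H → A, hyb ρ P π k s a * f s a := by
  have main : ∀ n : ℕ, k + n ≤ H →
      ∑ s : ∀ i : Fin (H + 1), S i, ∑ a : Fin H → A, hyb ρ P π (k + n) s a * f s a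
        = ∑ s : ∀ i : Fin (H + 1), S i, ∑ a : Fin H → A, hyb ρ P π k s a * f s a := by
    intro n
    induction n with
    | zero => intro _; rfl
    | succ n ih =>
        intro hn
        have h1 : k + n < H := by omega
        have h2 : k + (n + 1) = (k + n) + 1 := rfl
        rw [h2, hyb_step ρ P π hP hπ (k + n) h1 f
          (fun s a y => hfs ⟨k + n, h1⟩ (Nat.le_add_right k n) s a y)
          (fun s a b => hfa ⟨k + n, h1⟩ (Nat.le_add_right k n) s a b)]
        exact ih (by omega)
  have := main (H - k) (by omega)
  rwa [show k + (H - k) = H by omega] at this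

lemma expTraj_eq_hyb (ρ : S 0 → ℝ) (P : ∀ h : Fin H, S h.castSucc → A → S h.succ → ℝ)
    (π : ∀ h : Fin H, S h.castSucc → A → ℝ)
    (f : (∀ i : Fin (H + 1), S i) → (Fin H → A) → ℝ) :
    expTraj ρ P π f
      = ∑ s : ∀ i : Fin (H + 1), S i, ∑ a : Fin H → A, hyb ρ P π H s a * f s a := by
  unfold expTraj
  exact Finset.sum_congr rfl fun s _ => Finset.sum_congr rfl fun a _ => by rw [hyb_top]

end Hyb


section ExpStep
variable [∀ i, Nonempty (S i)] [Nonempty A]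

lemma pullC (h : Fin H) (x : S h.castSucc)
    (π : ∀ h : Fin H, S h.castSucc → A → ℝ)
    (P : ∀ h : Fin H, S h.castSucc → A → S h.succ → ℝ)
    (c : ℝ) (F : S h.castSucc → A → S h.succ → ℝ) :
    ∑ y : S h.succ, ∑ b : A, (c * (π h x b * P h x b y)) * F x b y
      = c * ∑ b : A, ∑ y : S h.succ, π h x b * P h x b y * F x b y := by
  rw [Finset.sum_comm, Finset.mul_sum]
  refine Finset.sum_congr rfl fun b _ => ?_
  rw [Finset.mul_sum]
  exact Finset.sum_congr rfl fun y _ => by ring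

lemma expStep_le (ρ : S 0 → ℝ) (P : ∀ h : Fin H, S h.castSucc → A → S h.succ → ℝ)
    (π : ∀ h : Fin H, S h.castSucc → A → ℝ)
    (hρ : ∀ x, 0 ≤ ρ x)
    (hPn : ∀ h x b y, 0 ≤ P h x b y) (hπn : ∀ h x b, 0 ≤ π h x b)
    (hP : ∀ h x b, ∑ y, P h x b y = 1) (hπ : ∀ h x, ∑ b, π h x b = 1)
    (h : Fin H) (F G : S h.castSucc → A → S h.succ → ℝ)
    (hcmp : ∀ x, ∑ b : A, ∑ y : S h.succ, π h x b * P h x b y * F x b y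
        ≤ ∑ b : A, ∑ y : S h.succ, π h x b * P h x b y * G x b y) :
    expTraj ρ P π (fun s a => F (s h.castSucc) (a h) (s h.succ))
      ≤ expTraj ρ P π (fun s a => G (s h.castSucc) (a h) (s h.succ)) := by
  have hfs : ∀ (F : S h.castSucc → A → S h.succ → ℝ) (t : Fin H), h.val + 1 ≤ t.val →
      ∀ (s : ∀ i : Fin (H + 1), S i) (a : Fin H → A) (y : S t.succ),
        (fun s a => F (s h.castSucc) (a h) (s h.succ)) (Function.update s t.succ y) a
          = (fun s a => F (s h.castSucc) (a h) (s h.succ)) s a := by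
    intro F t ht s a y
    have h1 : h.castSucc ≠ t.succ := Fin.ne_of_val_ne (by
      simp only [Fin.coe_castSucc, Fin.val_succ]; omega)
    have h2 : h.succ ≠ t.succ := Fin.ne_of_val_ne (by
      simp only [Fin.val_succ]; omega)
    simp only
    rw [Function.update_of_ne h1, Function.update_of_ne h2]
  have hfa : ∀ (F : S h.castSucc → A → S h.succ → ℝ) (t : Fin H), h.val + 1 ≤ t.val →
      ∀ (s : ∀ i : Fin (H + 1), S i) (a : Fin H → A) (b : A),
        (fun s a => F (s h.castSucc) (a h) (s h.succ)) s (Function.update a t b)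
          = (fun s a => F (s h.castSucc) (a h) (s h.succ)) s a := by
    intro F t ht s a b
    have h1 : h ≠ t := Fin.ne_of_val_ne (by omega)
    simp only
    rw [Function.update_of_ne h1]
  rw [expTraj_eq_hyb, expTraj_eq_hyb,
    hyb_chain ρ P π hP hπ (h.val + 1) h.isLt _ (hfs F) (hfa F),
    hyb_chain ρ P π hP hπ (h.val + 1) h.isLt _ (hfs G) (hfa G)]
  refine sum2_update_le h.succ h _ _ (fun s a => ?_)
  have hev : ∀ (F : S h.castSucc → A → S h.succ → ℝ) (y : S h.succ) (b : A),
      hyb ρ P π (h.val + 1) (Function.update s h.succ y) (Function.update a h b)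
          * F ((Function.update s h.succ y) h.castSucc) ((Function.update a h b) h)
              ((Function.update s h.succ y) h.succ)
        = (Cfac ρ P π h s a * (π h (s h.castSucc) b * P h (s h.castSucc) b y))
            * F (s h.castSucc) b y := by
    intro F y b
    have ecs : (Function.update s h.succ y) h.castSucc = s h.castSucc :=
      Function.update_of_ne (Fin.ne_of_val_ne (by
        simp only [Fin.coe_castSucc, Fin.val_succ]; omega)) _ _
    rw [hyb_update_succ, ecs, Function.update_self, Function.update_self]
  calc ∑ y : S h.succ, ∑ b : A,
        hyb ρ P π (h.val + 1) (Function.update s h.succ y) (Function.update a h b)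
          * F ((Function.update s h.succ y) h.castSucc) ((Function.update a h b) h)
              ((Function.update s h.succ y) h.succ)
      = ∑ y : S h.succ, ∑ b : A,
          (Cfac ρ P π h s a * (π h (s h.castSucc) b * P h (s h.castSucc) b y))
            * F (s h.castSucc) b y := by
        exact Finset.sum_congr rfl fun y _ => Finset.sum_congr rfl fun b _ => hev F y b
    _ = Cfac ρ P π h s a
          * ∑ b : A, ∑ y : S h.succ,
              π h (s h.castSucc) b * P h (s h.castSucc) b y * F (s h.castSucc) b y :=
        pullC h (s h.castSucc) π P _ F
    _ ≤ Cfac ρ P π h s a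
          * ∑ b : A, ∑ y : S h.succ,
              π h (s h.castSucc) b * P h (s h.castSucc) b y * G (s h.castSucc) b y :=
        mul_le_mul_of_nonneg_left (hcmp (s h.castSucc))
          (Cfac_nonneg ρ P π hρ hPn hπn h s a)
    _ = ∑ y : S h.succ, ∑ b : A,
          (Cfac ρ P π h s a * (π h (s h.castSucc) b * P h (s h.castSucc) b y))
            * G (s h.castSucc) b y := (pullC h (s h.castSucc) π P _ G).symm
    _ = ∑ y : S h.succ, ∑ b : A,
        hyb ρ P π (h.val + 1) (Function.update s h.succ y) (Function.update a h b)
          * G ((Function.update s h.succ y) h.castSucc) ((Function.update a h b) h)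
              ((Function.update s h.succ y) h.succ) := by
        exact Finset.sum_congr rfl fun y _ => Finset.sum_congr rfl fun b _ => (hev G y b).symm

lemma expStep_eq (ρ : S 0 → ℝ) (P : ∀ h : Fin H, S h.castSucc → A → S h.succ → ℝ)
    (π : ∀ h : Fin H, S h.castSucc → A → ℝ)
    (hρ : ∀ x, 0 ≤ ρ x)
    (hPn : ∀ h x b y, 0 ≤ P h x b y) (hπn : ∀ h x b, 0 ≤ π h x b)
    (hP : ∀ h x b, ∑ y, P h x b y = 1) (hπ : ∀ h x, ∑ b, π h x b = 1)
    (h : Fin H) (F G : S h.castSucc → A → S h.succ → ℝ)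
    (hcmp : ∀ x, ∑ b : A, ∑ y : S h.succ, π h x b * P h x b y * F x b y
        = ∑ b : A, ∑ y : S h.succ, π h x b * P h x b y * G x b y) :
    expTraj ρ P π (fun s a => F (s h.castSucc) (a h) (s h.succ))
      = expTraj ρ P π (fun s a => G (s h.castSucc) (a h) (s h.succ)) :=
  le_antisymm
    (expStep_le ρ P π hρ hPn hπn hP hπ h F G fun x => le_of_eq (hcmp x))
    (expStep_le ρ P π hρ hPn hπn hP hπ h G F fun x => le_of_eq (hcmp x).symm)

lemma exp_head (ρ : S 0 → ℝ) (P : ∀ h : Fin H, S h.castSucc → A → S h.succ → ℝ)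
    (π π' : ∀ h : Fin H, S h.castSucc → A → ℝ)
    (hP : ∀ h x b, ∑ y, P h x b y = 1)
    (hπ : ∀ h x, ∑ b, π h x b = 1) (hπ' : ∀ h x, ∑ b, π' h x b = 1)
    (c : S 0 → ℝ) :
    expTraj ρ P π (fun s _a => c (s 0)) = expTraj ρ P π' (fun s _a => c (s 0)) := by
  have hfs : ∀ (t : Fin H), (0:ℕ) ≤ t.val →
      ∀ (s : ∀ i : Fin (H + 1), S i) (a : Fin H → A) (y : S t.succ),
        (fun (s : ∀ i : Fin (H + 1), S i) (_a : Fin H → A) => c (s 0))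
            (Function.update s t.succ y) a
          = (fun (s : ∀ i : Fin (H + 1), S i) (_a : Fin H → A) => c (s 0)) s a := by
    intro t _ s a y
    simp only
    rw [Function.update_of_ne (Fin.succ_ne_zero t).symm]
  have hfa : ∀ (t : Fin H), (0:ℕ) ≤ t.val →
      ∀ (s : ∀ i : Fin (H + 1), S i) (a : Fin H → A) (b : A),
        (fun (s : ∀ i : Fin (H + 1), S i) (_a : Fin H → A) => c (s 0)) s
            (Function.update a t b)
          = (fun (s : ∀ i : Fin (H + 1), S i) (_a : Fin H → A) => c (s 0)) s a := by
    intro t _ s a b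
    rfl
  rw [expTraj_eq_hyb, expTraj_eq_hyb,
    hyb_chain ρ P π hP hπ 0 (Nat.zero_le H) _ hfs hfa,
    hyb_chain ρ P π' hP hπ' 0 (Nat.zero_le H) _ hfs hfa]
  refine Finset.sum_congr rfl fun s _ => Finset.sum_congr rfl fun a _ => ?_
  have hh : hyb ρ P π 0 s a = hyb ρ P π' 0 s a := by
    unfold hyb
    congr 1
  rw [hh]

end ExpStep

section Linearity

lemma expTraj_congr (ρ : S 0 → ℝ) (P : ∀ h : Fin H, S h.castSucc → A → S h.succ → ℝ)
    (π : ∀ h : Fin H, S h.castSucc → A → ℝ)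
    {f g : (∀ i : Fin (H + 1), S i) → (Fin H → A) → ℝ}
    (hfg : ∀ s a, f s a = g s a) :
    expTraj ρ P π f = expTraj ρ P π g := by
  unfold expTraj
  exact Finset.sum_congr rfl fun s _ => Finset.sum_congr rfl fun a _ => by rw [hfg]

lemma expTraj_sum {ι : Type*} (ρ : S 0 → ℝ)
    (P : ∀ h : Fin H, S h.castSucc → A → S h.succ → ℝ)
    (π : ∀ h : Fin H, S h.castSucc → A → ℝ)
    (t : Finset ι) (F : ι → (∀ i : Fin (H + 1), S i) → (Fin H → A) → ℝ) :
    expTraj ρ P π (fun s a => ∑ i ∈ t, F i s a) = ∑ i ∈ t, expTraj ρ P π (F i) := by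
  unfold expTraj
  calc ∑ s : ∀ i : Fin (H + 1), S i, ∑ a : Fin H → A,
        trajDensity ρ P π s a * ∑ i ∈ t, F i s a
      = ∑ s : ∀ i : Fin (H + 1), S i, ∑ a : Fin H → A,
          ∑ i ∈ t, trajDensity ρ P π s a * F i s a := by
        exact Finset.sum_congr rfl fun s _ => Finset.sum_congr rfl fun a _ =>
          Finset.mul_sum _ _ _
    _ = ∑ s : ∀ i : Fin (H + 1), S i, ∑ i ∈ t, ∑ a : Fin H → A,
          trajDensity ρ P π s a * F i s a := by
        exact Finset.sum_congr rfl fun s _ => Finset.sum_comm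
    _ = ∑ i ∈ t, ∑ s : ∀ i : Fin (H + 1), S i, ∑ a : Fin H → A,
          trajDensity ρ P π s a * F i s a := Finset.sum_comm

lemma expTraj_smul (ρ : S 0 → ℝ) (P : ∀ h : Fin H, S h.castSucc → A → S h.succ → ℝ)
    (π : ∀ h : Fin H, S h.castSucc → A → ℝ) (c : ℝ)
    (f : (∀ i : Fin (H + 1), S i) → (Fin H → A) → ℝ) :
    expTraj ρ P π (fun s a => c * f s a) = c * expTraj ρ P π f := by
  unfold expTraj
  rw [Finset.mul_sum]
  refine Finset.sum_congr rfl fun s _ => ?_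
  rw [Finset.mul_sum]
  exact Finset.sum_congr rfl fun a _ => by ring

lemma expTraj_add (ρ : S 0 → ℝ) (P : ∀ h : Fin H, S h.castSucc → A → S h.succ → ℝ)
    (π : ∀ h : Fin H, S h.castSucc → A → ℝ)
    (f g : (∀ i : Fin (H + 1), S i) → (Fin H → A) → ℝ) :
    expTraj ρ P π (fun s a => f s a + g s a) = expTraj ρ P π f + expTraj ρ P π g := by
  unfold expTraj
  rw [← Finset.sum_add_distrib]
  refine Finset.sum_congr rfl fun s _ => ?_
  rw [← Finset.sum_add_distrib]
  exact Finset.sum_congr rfl fun a _ => by ring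

lemma expTraj_sub (ρ : S 0 → ℝ) (P : ∀ h : Fin H, S h.castSucc → A → S h.succ → ℝ)
    (π : ∀ h : Fin H, S h.castSucc → A → ℝ)
    (f g : (∀ i : Fin (H + 1), S i) → (Fin H → A) → ℝ) :
    expTraj ρ P π (fun s a => f s a - g s a) = expTraj ρ P π f - expTraj ρ P π g := by
  unfold expTraj
  rw [← Finset.sum_sub_distrib]
  refine Finset.sum_congr rfl fun s _ => ?_
  rw [← Finset.sum_sub_distrib]
  exact Finset.sum_congr rfl fun a _ => by ring

lemma expTraj_zero (ρ : S 0 → ℝ) (P : ∀ h : Fin H, S h.castSucc → A → S h.succ → ℝ)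
    (π : ∀ h : Fin H, S h.castSucc → A → ℝ) :
    expTraj ρ P π (fun _ _ => (0:ℝ)) = 0 := by
  simp [expTraj]

end Linearity


section MathFacts

lemma VQ_castSucc (Q : ∀ h : Fin H, S h.castSucc → A → ℝ) (h : Fin H) (x : S h.castSucc) :
    VQ Q h.castSucc x = Real.log (∑ b : A, Real.exp (Q h x b)) := by
  unfold VQ
  rw [Fin.lastCases_castSucc]

lemma VQ_last (Q : ∀ h : Fin H, S h.castSucc → A → ℝ) (x : S (Fin.last H)) :
    VQ Q (Fin.last H) x = 0 := by
  unfold VQ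
  rw [Fin.lastCases_last]

lemma log_softmax [Nonempty A] (Q : ∀ h : Fin H, S h.castSucc → A → ℝ) (h : Fin H)
    (x : S h.castSucc) (b : A) :
    Real.log (softmaxPolicy Q h x b) = Q h x b - VQ Q h.castSucc x := by
  unfold softmaxPolicy
  exact Real.log_exp _

lemma softmax_pos (Q : ∀ h : Fin H, S h.castSucc → A → ℝ) (h : Fin H)
    (x : S h.castSucc) (b : A) : 0 < softmaxPolicy Q h x b := Real.exp_pos _

lemma softmax_sum [Nonempty A] (Q : ∀ h : Fin H, S h.castSucc → A → ℝ) (h : Fin H)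
    (x : S h.castSucc) : ∑ b : A, softmaxPolicy Q h x b = 1 := by
  have hpos : 0 < ∑ b : A, Real.exp (Q h x b) :=
    Finset.sum_pos (fun b _ => Real.exp_pos _) Finset.univ_nonempty
  unfold softmaxPolicy
  simp only [VQ_castSucc, Real.exp_sub, Real.exp_log hpos]
  rw [← Finset.sum_div, div_self (ne_of_gt hpos)]

lemma gibbs [Nonempty A] (Q : ∀ h : Fin H, S h.castSucc → A → ℝ)
    (πd : ∀ h : Fin H, S h.castSucc → A → ℝ) (h : Fin H) (x : S h.castSucc)
    (hn : ∀ b, 0 ≤ πd h x b) (h1 : ∑ b : A, πd h x b = 1) :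
    ∑ b : A, πd h x b * (Real.log (softmaxPolicy Q h x b) - Real.log (πd h x b)) ≤ 0 := by
  have per_b : ∀ b : A, πd h x b * (Real.log (softmaxPolicy Q h x b) - Real.log (πd h x b))
      ≤ softmaxPolicy Q h x b - πd h x b := by
    intro b
    by_cases hb : πd h x b = 0
    · rw [hb]
      simp only [zero_mul, sub_zero]
      exact (softmax_pos Q h x b).le
    · have hbpos : 0 < πd h x b := lt_of_le_of_ne (hn b) (Ne.symm hb)
      have hsm := softmax_pos Q h x b
      have hlog : Real.log (softmaxPolicy Q h x b) - Real.log (πd h x b)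
          = Real.log (softmaxPolicy Q h x b / πd h x b) :=
        (Real.log_div (ne_of_gt hsm) hb).symm
      have hle : Real.log (softmaxPolicy Q h x b / πd h x b)
          ≤ softmaxPolicy Q h x b / πd h x b - 1 :=
        Real.log_le_sub_one_of_pos (div_pos hsm hbpos)
      calc πd h x b * (Real.log (softmaxPolicy Q h x b) - Real.log (πd h x b))
          = πd h x b * Real.log (softmaxPolicy Q h x b / πd h x b) := by rw [hlog]
        _ ≤ πd h x b * (softmaxPolicy Q h x b / πd h x b - 1) :=
            mul_le_mul_of_nonneg_left hle hbpos.le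
        _ = softmaxPolicy Q h x b - πd h x b := by field_simp
  calc ∑ b : A, πd h x b * (Real.log (softmaxPolicy Q h x b) - Real.log (πd h x b))
      ≤ ∑ b : A, (softmaxPolicy Q h x b - πd h x b) := Finset.sum_le_sum fun b _ => per_b b
    _ = (∑ b : A, softmaxPolicy Q h x b) - ∑ b : A, πd h x b := Finset.sum_sub_distrib _ _
    _ = 0 := by rw [softmax_sum, h1, sub_self]

lemma telescope (W : ∀ i : Fin (H + 1), S i → ℝ) (s : ∀ i : Fin (H + 1), S i) :
    ∑ h : Fin H, (W h.castSucc (s h.castSucc) - W h.succ (s h.succ))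
      = W 0 (s 0) - W (Fin.last H) (s (Fin.last H)) := by
  set g : ℕ → ℝ := fun n => if hn : n < H + 1 then W ⟨n, hn⟩ (s ⟨n, hn⟩) else 0 with hg
  have h1 : ∀ h : Fin H, W h.castSucc (s h.castSucc) - W h.succ (s h.succ)
      = g h.val - g (h.val + 1) := by
    intro h
    rw [hg]
    simp only
    rw [dif_pos (by omega : h.val < H + 1), dif_pos (by omega : h.val + 1 < H + 1)]
    rfl
  have h2 : g 0 = W 0 (s 0) := by
    rw [hg]
    simp only
    rw [dif_pos (by omega : 0 < H + 1)]
    have : (⟨0, by omega⟩ : Fin (H + 1)) = 0 := by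
      ext
      simp
    rw [this]
  have h3 : g H = W (Fin.last H) (s (Fin.last H)) := by
    rw [hg]
    simp only
    rw [dif_pos (by omega : H < H + 1)]
    rfl
  calc ∑ h : Fin H, (W h.castSucc (s h.castSucc) - W h.succ (s h.succ))
      = ∑ h : Fin H, (g h.val - g (h.val + 1)) := Finset.sum_congr rfl fun h _ => h1 h
    _ = ∑ i ∈ Finset.range H, (g i - g (i + 1)) :=
        Fin.sum_univ_eq_sum_range (fun i => g i - g (i + 1)) H
    _ = g 0 - g H := Finset.sum_range_sub' g H
    _ = W 0 (s 0) - W (Fin.last H) (s (Fin.last H)) := by rw [h2, h3]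

end MathFacts


section Key
variable [∀ i, Nonempty (S i)] [Nonempty A]

lemma KLret_key (ρ : S 0 → ℝ) (P : ∀ h : Fin H, S h.castSucc → A → S h.succ → ℝ)
    (πref : ∀ h : Fin H, S h.castSucc → A → ℝ)
    (r : ∀ h : Fin H, S h.castSucc → A → ℝ) (β : ℝ)
    (Q : ∀ h : Fin H, S h.castSucc → A → ℝ)
    (π : ∀ h : Fin H, S h.castSucc → A → ℝ)
    (hρ : ∀ x, 0 ≤ ρ x)
    (hPn : ∀ h x b y, 0 ≤ P h x b y) (hπn : ∀ h x b, 0 ≤ π h x b)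
    (hP : ∀ h x b, ∑ y, P h x b y = 1) (hπ : ∀ h x, ∑ b, π h x b = 1)
    (hπrefpos : ∀ h x b, 0 < πref h x b) (hβ : β ≠ 0) :
    KLret ρ P πref r β π
      = β * (expTraj ρ P π (fun s _a => VQ Q 0 (s 0))
          + (∑ h : Fin H, expTraj ρ P π (fun s a =>
              Real.log (softmaxPolicy Q h (s h.castSucc) (a h))
                - Real.log (π h (s h.castSucc) (a h))))
          - expTraj ρ P π (fun s a => ∑ h : Fin H,
              (Q h (s h.castSucc) (a h) - Topt P πref r β Q h (s h.castSucc) (a h)))) := by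
  have keyh : ∀ h : Fin H,
      expTraj ρ P π (fun s a => r h (s h.castSucc) (a h)
          - β * Real.log (π h (s h.castSucc) (a h) / πref h (s h.castSucc) (a h)))
        = expTraj ρ P π (fun s a => β *
            ((VQ Q h.castSucc (s h.castSucc) - VQ Q h.succ (s h.succ))
              + (Real.log (softmaxPolicy Q h (s h.castSucc) (a h))
                  - Real.log (π h (s h.castSucc) (a h)))
              - (Q h (s h.castSucc) (a h) - Topt P πref r β Q h (s h.castSucc) (a h)))) := by
    intro h
    refine expStep_eq ρ P π hρ hPn hπn hP hπ h
      (fun x b _y => r h x b - β * Real.log (π h x b / πref h x b))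
      (fun x b y => β * ((VQ Q h.castSucc x - VQ Q h.succ y)
          + (Real.log (softmaxPolicy Q h x b) - Real.log (π h x b))
          - (Q h x b - Topt P πref r β Q h x b)))
      (fun x => ?_)
    refine Finset.sum_congr rfl fun b _ => ?_
    by_cases hb : π h x b = 0
    · simp [hb]
    · set T : ℝ := ∑ y : S h.succ, P h x b y * VQ Q h.succ y with hTdef
      set c1 : ℝ := β * (VQ Q h.castSucc x
          + (Real.log (softmaxPolicy Q h x b) - Real.log (π h x b))
          - (Q h x b - Topt P πref r β Q h x b)) with hc1
      have hTopt : Topt P πref r β Q h x b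
          = r h x b / β + Real.log (πref h x b) + T := rfl
      have hFval : r h x b - β * Real.log (π h x b / πref h x b) = c1 - β * T := by
        rw [hc1, Real.log_div hb (ne_of_gt (hπrefpos h x b)), log_softmax, hTopt]
        field_simp
        ring
      have hGy : ∀ y : S h.succ,
          β * ((VQ Q h.castSucc x - VQ Q h.succ y)
            + (Real.log (softmaxPolicy Q h x b) - Real.log (π h x b))
            - (Q h x b - Topt P πref r β Q h x b))
          = c1 - β * VQ Q h.succ y := by
        intro y
        rw [hc1]
        ring
      calc ∑ y : S h.succ, π h x b * P h x b y
            * (r h x b - β * Real.log (π h x b / πref h x b))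
          = ∑ y : S h.succ, (π h x b * (c1 - β * T)) * P h x b y :=
            Finset.sum_congr rfl fun y _ => by rw [hFval]; ring
        _ = (π h x b * (c1 - β * T)) * ∑ y : S h.succ, P h x b y :=
            (Finset.mul_sum _ _ _).symm
        _ = π h x b * c1 - β * (π h x b * T) := by rw [hP h x b]; ring
        _ = π h x b * c1 - β * π h x b * ∑ y : S h.succ, P h x b y * VQ Q h.succ y := by
            rw [hTdef]; ring
        _ = ∑ y : S h.succ, (π h x b * c1 * P h x b y
              - β * π h x b * (P h x b y * VQ Q h.succ y)) := by
            rw [Finset.sum_sub_distrib, ← Finset.mul_sum, ← Finset.mul_sum, hP h x b]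
            ring
        _ = ∑ y : S h.succ, π h x b * P h x b y * (c1 - β * VQ Q h.succ y) :=
            Finset.sum_congr rfl fun y _ => by ring
        _ = ∑ y : S h.succ, π h x b * P h x b y
              * (β * ((VQ Q h.castSucc x - VQ Q h.succ y)
                + (Real.log (softmaxPolicy Q h x b) - Real.log (π h x b))
                - (Q h x b - Topt P πref r β Q h x b))) :=
            Finset.sum_congr rfl fun y _ => by rw [hGy y]
  calc KLret ρ P πref r β π
      = ∑ h : Fin H, expTraj ρ P π (fun s a => r h (s h.castSucc) (a h)
          - β * Real.log (π h (s h.castSucc) (a h) / πref h (s h.castSucc) (a h))) :=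
        expTraj_sum ρ P π Finset.univ _
    _ = ∑ h : Fin H, expTraj ρ P π (fun s a => β *
            ((VQ Q h.castSucc (s h.castSucc) - VQ Q h.succ (s h.succ))
              + (Real.log (softmaxPolicy Q h (s h.castSucc) (a h))
                  - Real.log (π h (s h.castSucc) (a h)))
              - (Q h (s h.castSucc) (a h) - Topt P πref r β Q h (s h.castSucc) (a h)))) :=
        Finset.sum_congr rfl fun h _ => keyh h
    _ = ∑ h : Fin H, (β *
          (expTraj ρ P π (fun s a =>
              VQ Q h.castSucc (s h.castSucc) - VQ Q h.succ (s h.succ))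
            + expTraj ρ P π (fun s a =>
              Real.log (softmaxPolicy Q h (s h.castSucc) (a h))
                - Real.log (π h (s h.castSucc) (a h)))
            - expTraj ρ P π (fun s a =>
              Q h (s h.castSucc) (a h) - Topt P πref r β Q h (s h.castSucc) (a h)))) := by
        refine Finset.sum_congr rfl fun h _ => ?_
        have e1 : expTraj ρ P π (fun s a => β *
            ((VQ Q h.castSucc (s h.castSucc) - VQ Q h.succ (s h.succ))
              + (Real.log (softmaxPolicy Q h (s h.castSucc) (a h))
                  - Real.log (π h (s h.castSucc) (a h)))
              - (Q h (s h.castSucc) (a h) - Topt P πref r β Q h (s h.castSucc) (a h))))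
            = β * expTraj ρ P π (fun s a =>
              (VQ Q h.castSucc (s h.castSucc) - VQ Q h.succ (s h.succ))
              + (Real.log (softmaxPolicy Q h (s h.castSucc) (a h))
                  - Real.log (π h (s h.castSucc) (a h)))
              - (Q h (s h.castSucc) (a h) - Topt P πref r β Q h (s h.castSucc) (a h))) :=
          expTraj_smul ρ P π β _
        have e2 : expTraj ρ P π (fun s a =>
              (VQ Q h.castSucc (s h.castSucc) - VQ Q h.succ (s h.succ))
              + (Real.log (softmaxPolicy Q h (s h.castSucc) (a h))
                  - Real.log (π h (s h.castSucc) (a h)))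
              - (Q h (s h.castSucc) (a h) - Topt P πref r β Q h (s h.castSucc) (a h)))
            = expTraj ρ P π (fun s a =>
              (VQ Q h.castSucc (s h.castSucc) - VQ Q h.succ (s h.succ))
              + (Real.log (softmaxPolicy Q h (s h.castSucc) (a h))
                  - Real.log (π h (s h.castSucc) (a h))))
              - expTraj ρ P π (fun s a =>
              Q h (s h.castSucc) (a h) - Topt P πref r β Q h (s h.castSucc) (a h)) :=
          expTraj_sub ρ P π _ _
        have e3 : expTraj ρ P π (fun s a =>
              (VQ Q h.castSucc (s h.castSucc) - VQ Q h.succ (s h.succ))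
              + (Real.log (softmaxPolicy Q h (s h.castSucc) (a h))
                  - Real.log (π h (s h.castSucc) (a h))))
            = expTraj ρ P π (fun s a =>
              VQ Q h.castSucc (s h.castSucc) - VQ Q h.succ (s h.succ))
              + expTraj ρ P π (fun s a =>
              Real.log (softmaxPolicy Q h (s h.castSucc) (a h))
                - Real.log (π h (s h.castSucc) (a h))) :=
          expTraj_add ρ P π _ _
        rw [e1, e2, e3]
    _ = β * ((∑ h : Fin H, expTraj ρ P π (fun s a =>
              VQ Q h.castSucc (s h.castSucc) - VQ Q h.succ (s h.succ)))
          + (∑ h : Fin H, expTraj ρ P π (fun s a =>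
              Real.log (softmaxPolicy Q h (s h.castSucc) (a h))
                - Real.log (π h (s h.castSucc) (a h))))
          - ∑ h : Fin H, expTraj ρ P π (fun s a =>
              Q h (s h.castSucc) (a h) - Topt P πref r β Q h (s h.castSucc) (a h))) := by
        rw [← Finset.mul_sum, Finset.sum_sub_distrib, Finset.sum_add_distrib]
    _ = β * (expTraj ρ P π (fun s _a => VQ Q 0 (s 0))
          + (∑ h : Fin H, expTraj ρ P π (fun s a =>
              Real.log (softmaxPolicy Q h (s h.castSucc) (a h))
                - Real.log (π h (s h.castSucc) (a h))))
          - expTraj ρ P π (fun s a => ∑ h : Fin H,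
              (Q h (s h.castSucc) (a h) - Topt P πref r β Q h (s h.castSucc) (a h)))) := by
        have e4 : (∑ h : Fin H, expTraj ρ P π (fun s a =>
              VQ Q h.castSucc (s h.castSucc) - VQ Q h.succ (s h.succ)))
            = expTraj ρ P π (fun s a => ∑ h : Fin H,
              (VQ Q h.castSucc (s h.castSucc) - VQ Q h.succ (s h.succ))) :=
          (expTraj_sum ρ P π Finset.univ _).symm
        have e5 : expTraj ρ P π (fun s a => ∑ h : Fin H,
              (VQ Q h.castSucc (s h.castSucc) - VQ Q h.succ (s h.succ)))
            = expTraj ρ P π (fun s _a => VQ Q 0 (s 0)) := by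
          refine expTraj_congr ρ P π fun s a => ?_
          rw [telescope (VQ Q) s, VQ_last, sub_zero]
        have e6 : (∑ h : Fin H, expTraj ρ P π (fun s a =>
              Q h (s h.castSucc) (a h) - Topt P πref r β Q h (s h.castSucc) (a h)))
            = expTraj ρ P π (fun s a => ∑ h : Fin H,
              (Q h (s h.castSucc) (a h) - Topt P πref r β Q h (s h.castSucc) (a h))) :=
          (expTraj_sum ρ P π Finset.univ _).symm
        rw [e4, e5, e6]

end Key

/-- **Suboptimality bound for softmax policies via expected Bellman errors.** For any `Q`
with softmax policy `π̂ := π_Q` and any policy `π†`,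
`J_β(π†) − J_β(π̂) ≤ 2β · max_{π ∈ {π†,π̂}} |E_π[Σ_h (Q_h(s_h,a_h) − (T_β Q)_h(s_h,a_h))]|`. -/
theorem suboptimality_of_softmax
    (hH : 0 < H) [∀ i, Nonempty (S i)] [Nonempty A]
    (ρ : S 0 → ℝ) (hρ : IsPMF ρ)
    (P : ∀ h : Fin H, S h.castSucc → A → S h.succ → ℝ)
    (hP : ∀ h s a, IsPMF (P h s a))
    (r : ∀ h : Fin H, S h.castSucc → A → ℝ)
    (πref : ∀ h : Fin H, S h.castSucc → A → ℝ)
    (hπref : ∀ h s, IsPMF (πref h s)) (hπrefpos : ∀ h s a, 0 < πref h s a)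
    (β : ℝ) (hβ : 0 < β)
    (Q : ∀ h : Fin H, S h.castSucc → A → ℝ)
    (πdag : ∀ h : Fin H, S h.castSucc → A → ℝ)
    (hπdag : ∀ h s, IsPMF (πdag h s)) :
    KLret ρ P πref r β πdag - KLret ρ P πref r β (softmaxPolicy Q) ≤
      2 * β * max
        |expTraj ρ P πdag (fun s a => ∑ h : Fin H,
            (Q h (s h.castSucc) (a h) - Topt P πref r β Q h (s h.castSucc) (a h)))|
        |expTraj ρ P (softmaxPolicy Q) (fun s a => ∑ h : Fin H,
            (Q h (s h.castSucc) (a h) - Topt P πref r β Q h (s h.castSucc) (a h)))| := by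
  obtain ⟨hρn, hρ1⟩ := hρ
  have hPn : ∀ h x b y, 0 ≤ P h x b y := fun h x b y => (hP h x b).1 y
  have hP1 : ∀ h x b, ∑ y, P h x b y = 1 := fun h x b => (hP h x b).2
  have hdn : ∀ h x b, 0 ≤ πdag h x b := fun h x b => (hπdag h x).1 b
  have hd1 : ∀ h x, ∑ b, πdag h x b = 1 := fun h x => (hπdag h x).2
  have hsn : ∀ h x (b : A), 0 ≤ softmaxPolicy Q h x b := fun h x b => (softmax_pos Q h x b).le
  have hs1 : ∀ h x, ∑ b : A, softmaxPolicy Q h x b = 1 := fun h x => softmax_sum Q h x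
  have key1 := KLret_key ρ P πref r β Q πdag hρn hPn hdn hP1 hd1 hπrefpos hβ.ne'
  have key2 := KLret_key ρ P πref r β Q (softmaxPolicy Q) hρn hPn hsn hP1 hs1 hπrefpos hβ.ne'
  have hC : expTraj ρ P πdag (fun s _a => VQ Q 0 (s 0))
      = expTraj ρ P (softmaxPolicy Q) (fun s _a => VQ Q 0 (s 0)) :=
    exp_head ρ P πdag (softmaxPolicy Q) hP1 hd1 hs1 (VQ Q 0)
  have hKhat : (∑ h : Fin H, expTraj ρ P (softmaxPolicy Q) (fun s a =>
      Real.log (softmaxPolicy Q h (s h.castSucc) (a h))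
        - Real.log (softmaxPolicy Q h (s h.castSucc) (a h)))) = 0 := by
    refine Finset.sum_eq_zero fun h _ => ?_
    have e0 : expTraj ρ P (softmaxPolicy Q) (fun s a =>
        Real.log (softmaxPolicy Q h (s h.castSucc) (a h))
          - Real.log (softmaxPolicy Q h (s h.castSucc) (a h)))
        = expTraj ρ P (softmaxPolicy Q) (fun _ _ => (0:ℝ)) :=
      expTraj_congr ρ P (softmaxPolicy Q) fun s a => sub_self _
    rw [e0, expTraj_zero]
  have hKdag : (∑ h : Fin H, expTraj ρ P πdag (fun s a =>
      Real.log (softmaxPolicy Q h (s h.castSucc) (a h))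
        - Real.log (πdag h (s h.castSucc) (a h)))) ≤ 0 := by
    refine Finset.sum_nonpos fun h _ => ?_
    have hcmp : ∀ x : S h.castSucc,
        ∑ b : A, ∑ y : S h.succ, πdag h x b * P h x b y
            * (Real.log (softmaxPolicy Q h x b) - Real.log (πdag h x b))
          ≤ ∑ b : A, ∑ y : S h.succ, πdag h x b * P h x b y * (0:ℝ) := by
      intro x
      have hr : ∑ b : A, ∑ y : S h.succ, πdag h x b * P h x b y * (0:ℝ) = 0 := by
        simp
      have hl : ∑ b : A, ∑ y : S h.succ, πdag h x b * P h x b y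
            * (Real.log (softmaxPolicy Q h x b) - Real.log (πdag h x b))
          = ∑ b : A, πdag h x b
            * (Real.log (softmaxPolicy Q h x b) - Real.log (πdag h x b)) := by
        refine Finset.sum_congr rfl fun b _ => ?_
        calc ∑ y : S h.succ, πdag h x b * P h x b y
              * (Real.log (softmaxPolicy Q h x b) - Real.log (πdag h x b))
            = ∑ y : S h.succ, (πdag h x b
              * (Real.log (softmaxPolicy Q h x b) - Real.log (πdag h x b))) * P h x b y :=
              Finset.sum_congr rfl fun y _ => by ring
          _ = (πdag h x b
              * (Real.log (softmaxPolicy Q h x b) - Real.log (πdag h x b)))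
                * ∑ y : S h.succ, P h x b y := (Finset.mul_sum _ _ _).symm
          _ = _ := by rw [hP1 h x b, mul_one]
      rw [hr, hl]
      exact gibbs Q πdag h x (fun b => hdn h x b) (hd1 h x)
    have hle : expTraj ρ P πdag (fun s a =>
        Real.log (softmaxPolicy Q h (s h.castSucc) (a h))
          - Real.log (πdag h (s h.castSucc) (a h)))
        ≤ expTraj ρ P πdag (fun _ _ => (0:ℝ)) :=
      expStep_le ρ P πdag hρn hPn hdn hP1 hd1 h
        (fun x b _y => Real.log (softmaxPolicy Q h x b) - Real.log (πdag h x b))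
        (fun _ _ _ => (0:ℝ)) hcmp
    rw [expTraj_zero] at hle
    exact hle
  set D1 := expTraj ρ P πdag (fun s a => ∑ h : Fin H,
      (Q h (s h.castSucc) (a h) - Topt P πref r β Q h (s h.castSucc) (a h))) with hD1
  set D2 := expTraj ρ P (softmaxPolicy Q) (fun s a => ∑ h : Fin H,
      (Q h (s h.castSucc) (a h) - Topt P πref r β Q h (s h.castSucc) (a h))) with hD2
  set K := ∑ h : Fin H, expTraj ρ P πdag (fun s a =>
      Real.log (softmaxPolicy Q h (s h.castSucc) (a h))
        - Real.log (πdag h (s h.castSucc) (a h))) with hK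
  have hdiff : KLret ρ P πref r β πdag - KLret ρ P πref r β (softmaxPolicy Q)
      = β * K + β * (D2 - D1) := by
    rw [key1, key2, hC, hKhat]
    ring
  have hM1 : |D1| ≤ max |D1| |D2| := le_max_left _ _
  have hM2 : |D2| ≤ max |D1| |D2| := le_max_right _ _
  have hDd : D2 - D1 ≤ 2 * max |D1| |D2| := by
    have a1 := le_abs_self D2
    have a2 := neg_abs_le D1
    linarith
  have hb1 : β * K ≤ 0 := mul_nonpos_of_nonneg_of_nonpos hβ.le hKdag
  have hb2 : β * (D2 - D1) ≤ β * (2 * max |D1| |D2|) :=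
    mul_le_mul_of_nonneg_left hDd hβ.le
  calc KLret ρ P πref r β πdag - KLret ρ P πref r β (softmaxPolicy Q)
      = β * K + β * (D2 - D1) := hdiff
    _ ≤ 0 + β * (2 * max |D1| |D2|) := add_le_add hb1 hb2
    _ = 2 * β * max |D1| |D2| := by ring

end TBRM
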